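/- For every nonzero v ∈ K^n the matrix F(v) has rank at least n − 1; hence rank F(v) ∈ {n−1, n}, and there exists a nonzero w ∈ K^n with F(v)·w = 0 if and only if rank F(v) = n − 1, if and only if every n × n minor of F(v) vanishes; in that case the kernel of F(v) is exactly one-dimensional, so such a w is unique up to a scalar multiple. -/

import Mathlib

open Matrix

/-- Row index type for the multilinearized relations of the multiparameter quantum
affine `n`-space: pairs `(i,j)` with `i < j`. -/
def quantumRowIdx (n : ℕ) := {p : Fin n × Fin n // p.1 < p.2}

instance (n : ℕ) : Fintype (quantumRowIdx n) := by
  unfold quantumRowIdx; infer_instance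

instance (n : ℕ) : DecidableEq (quantumRowIdx n) := by
  unfold quantumRowIdx; infer_instance

/-- The `(n(n−1)/2) × n` matrix `F(v)` whose row indexed by `(i,j)`, `i < j`, has entry
`v j` in column `i`, entry `−q i j * v i` in column `j`, and zeros elsewhere. -/
def quantumMatrixFn {K : Type*} [Field K] {n : ℕ} (q : Fin n → Fin n → K)
    (v : Fin n → K) : Matrix (quantumRowIdx n) (Fin n) K :=
  fun r k =>
    if k = r.1.1 then v r.1.2 else if k = r.1.2 then -q r.1.1 r.1.2 * v r.1.1 else 0

/-- for nonzero `v ∈ Kⁿ`, `F(v)` has rank at least `n − 1` (hence rank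
`n − 1` or `n`); there is a nonzero `w` with `F(v)·w = 0` iff the rank is `n − 1`, iff
every `n × n` minor of `F(v)` vanishes; and in that case the kernel of `F(v)` is exactly
one-dimensional, so `w` is unique up to scalar. -/
lemma quantum_mulVec_apply {K : Type*} [Field K] {n : ℕ} (q : Fin n → Fin n → K)
    (v w : Fin n → K) (r : quantumRowIdx n) :
    (quantumMatrixFn q v *ᵥ w) r
      = v r.1.2 * w r.1.1 - q r.1.1 r.1.2 * (v r.1.1 * w r.1.2) := by
  obtain ⟨⟨i, j⟩, hij⟩ := r
  have hne : i ≠ j := ne_of_lt hij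
  simp only [Matrix.mulVec, dotProduct, quantumMatrixFn]
  have key : ∀ k : Fin n,
      (if k = i then v j else if k = j then -q i j * v i else 0) * w k
        = (if k = i then v j * w i else 0) + (if k = j then -(q i j * (v i * w j)) else 0) := by
    intro k
    by_cases h1 : k = i
    · subst h1
      simp [hne]
    · by_cases h2 : k = j
      · subst h2; simp [h1]; ring
      · simp [h1, h2]
  rw [Finset.sum_congr rfl (fun k _ => key k), Finset.sum_add_distrib,
    Finset.sum_ite_eq' Finset.univ i, Finset.sum_ite_eq' Finset.univ j]
  simp; ring

section Main
variable {K : Type*} [Field K] {n : ℕ}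

lemma quantum_ker_zero (q : Fin n → Fin n → K) (hq : ∀ i j : Fin n, i < j → q i j ≠ 0)
    (v : Fin n → K) {i₀ : Fin n} (hi₀ : v i₀ ≠ 0) (w : Fin n → K)
    (hw : quantumMatrixFn q v *ᵥ w = 0) (h0 : w i₀ = 0) : w = 0 := by
  funext k
  rcases lt_trichotomy k i₀ with hlt | heq | hgt
  · have h := congrFun hw (⟨(k, i₀), hlt⟩ : quantumRowIdx n)
    erw [quantum_mulVec_apply] at h
    simp only [h0, mul_zero, sub_zero, Pi.zero_apply] at h
    exact (mul_eq_zero.mp h).resolve_left hi₀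
  · rw [heq]; exact h0
  · have h := congrFun hw (⟨(i₀, k), hgt⟩ : quantumRowIdx n)
    erw [quantum_mulVec_apply] at h
    change _ = (0 : K) at h
    simp only [h0, mul_zero, zero_sub, Pi.zero_apply, neg_eq_zero] at h
    rcases mul_eq_zero.mp h with h' | h'
    · exact absurd h' (hq i₀ k hgt)
    · exact (mul_eq_zero.mp h').resolve_left hi₀

lemma quantum_ker_finrank_le (q : Fin n → Fin n → K) (hq : ∀ i j : Fin n, i < j → q i j ≠ 0)
    (v : Fin n → K) (hv : v ≠ 0) :
    Module.finrank K (LinearMap.ker (quantumMatrixFn q v).mulVecLin) ≤ 1 := by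
  obtain ⟨i₀, hi₀⟩ : ∃ i, v i ≠ 0 := by
    by_contra h; push_neg at h; exact hv (funext h)
  let φ : LinearMap.ker (quantumMatrixFn q v).mulVecLin →ₗ[K] K :=
    (LinearMap.proj i₀).comp (LinearMap.ker (quantumMatrixFn q v).mulVecLin).subtype
  have hφ : Function.Injective φ := by
    rw [injective_iff_map_eq_zero]
    intro x hx
    have hker : quantumMatrixFn q v *ᵥ (x : Fin n → K) = 0 := x.2
    have := quantum_ker_zero q hq v hi₀ x hker hx
    exact Subtype.ext this
  simpa using LinearMap.finrank_le_finrank_of_injective hφ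

lemma quantum_rank_nullity (q : Fin n → Fin n → K) (v : Fin n → K) :
    (quantumMatrixFn q v).rank
      + Module.finrank K (LinearMap.ker (quantumMatrixFn q v).mulVecLin) = n := by
  have h := (quantumMatrixFn q v).mulVecLin.finrank_range_add_finrank_ker
  rw [Matrix.rank]
  simpa using h

lemma quantum_rank_submatrix_le (q : Fin n → Fin n → K) (v : Fin n → K)
    (r : Fin n ↪ quantumRowIdx n) :
    ((quantumMatrixFn q v).submatrix r id).rank ≤ (quantumMatrixFn q v).rank := by
  have heq : (quantumMatrixFn q v).submatrix (⇑r) id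
      = (quantumMatrixFn q v).submatrix (⇑r) (Equiv.refl (Fin n)) := rfl
  have hid : LinearMap.funLeft K K ⇑(Equiv.refl (Fin n)).symm = LinearMap.id := by
    ext x; rfl
  rw [Matrix.rank, Matrix.rank, heq, Matrix.mulVecLin_submatrix, hid, LinearMap.comp_id,
    LinearMap.range_comp]
  exact Submodule.finrank_map_le _ _

lemma quantum_minor_of_full_rank (q : Fin n → Fin n → K) (v : Fin n → K)
    (h : (quantumMatrixFn q v).rank = n) :
    ∃ r : Fin n ↪ quantumRowIdx n, ((quantumMatrixFn q v).submatrix r id).det ≠ 0 := by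
  classical
  set A := quantumMatrixFn q v with hA
  have hspan : Submodule.span K (Set.range A) = ⊤ := by
    apply Submodule.eq_top_of_finrank_eq
    erw [← Matrix.rank_eq_finrank_span_row, h]
    simp [Module.finrank_pi]
  obtain ⟨b, hbsub, hbspan, hbli⟩ := exists_linearIndependent K (Set.range A)
  have hbfin : b.Finite := (Set.finite_range A).subset hbsub
  haveI : Fintype b := hbfin.fintype
  have hbasis : Nonempty (Module.Basis b K (Fin n → K)) := by
    refine ⟨Module.Basis.mk hbli ?_⟩
    rw [Subtype.range_coe, hbspan, hspan]
  obtain ⟨bb⟩ := hbasis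
  have hcard : Fintype.card b = n := by
    have := Module.finrank_eq_card_basis bb
    simp [Module.finrank_pi] at this
    rw [← Nat.card_eq_fintype_card, Nat.card_coe_set_eq]
    omega
  choose g hg using fun x : b => hbsub x.2
  have hginj : Function.Injective g := by
    intro x y hxy
    apply Subtype.ext
    rw [← hg x, ← hg y, hxy]
  let e : Fin n ≃ b := (Fintype.equivFinOfCardEq hcard).symm
  refine ⟨⟨g ∘ e, hginj.comp e.injective⟩, ?_⟩
  have hrows : ∀ i, (A.submatrix (g ∘ e) id) i = ((e i : Fin n → K)) := by
    intro i
    funext k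
    simp [Matrix.submatrix, hg (e i)]
  have hli : LinearIndependent K (fun i => (A.submatrix (g ∘ e) id) i) := by
    have : (fun i => (A.submatrix (g ∘ e) id) i) = (fun x : b => (x : Fin n → K)) ∘ e := by
      funext i; exact hrows i
    rw [this]
    exact hbli.comp e e.injective
  have hunit : IsUnit (A.submatrix (g ∘ e) id) :=
    Matrix.linearIndependent_rows_iff_isUnit.mp hli
  have := (Matrix.isUnit_iff_isUnit_det _).mp hunit
  exact this.ne_zero

end Main

theorem quantumAffineN_matrixF_rank {K : Type*} [Field K] {n : ℕ} (hn : 2 ≤ n)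
    (q : Fin n → Fin n → K) (hq : ∀ i j : Fin n, i < j → q i j ≠ 0)
    (v : Fin n → K) (hv : v ≠ 0) :
    n - 1 ≤ (quantumMatrixFn q v).rank ∧
    ((quantumMatrixFn q v).rank = n - 1 ∨ (quantumMatrixFn q v).rank = n) ∧
    ((∃ w : Fin n → K, w ≠ 0 ∧ (quantumMatrixFn q v) *ᵥ w = 0) ↔
        (quantumMatrixFn q v).rank = n - 1) ∧
    ((quantumMatrixFn q v).rank = n - 1 ↔
        ∀ r : Fin n ↪ quantumRowIdx n, ((quantumMatrixFn q v).submatrix r id).det = 0) ∧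
    ((quantumMatrixFn q v).rank = n - 1 →
      Module.finrank K (LinearMap.ker (quantumMatrixFn q v).mulVecLin) = 1 ∧
      ∃ w : Fin n → K, w ≠ 0 ∧ (quantumMatrixFn q v) *ᵥ w = 0 ∧
        ∀ w' : Fin n → K, (quantumMatrixFn q v) *ᵥ w' = 0 → ∃ c : K, w' = c • w) := by
  classical
  have hrn := quantum_rank_nullity q v
  have hkle := quantum_ker_finrank_le q hq v hv
  have hwidth : (quantumMatrixFn q v).rank ≤ n := by
    have := (quantumMatrixFn q v).rank_le_card_width
    simpa using this
  have hk : Module.finrank K (LinearMap.ker (quantumMatrixFn q v).mulVecLin)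
      = Module.finrank K (LinearMap.ker (quantumMatrixFn q v).mulVecLin) := rfl
  have hge : n - 1 ≤ (quantumMatrixFn q v).rank := by omega
  have hor : (quantumMatrixFn q v).rank = n - 1 ∨ (quantumMatrixFn q v).rank = n := by omega
  have hkex : Module.finrank K (LinearMap.ker (quantumMatrixFn q v).mulVecLin) = 1 → ∃ w : Fin n → K, w ≠ 0 ∧ (quantumMatrixFn q v) *ᵥ w = 0 ∧
      ∀ w' : Fin n → K, (quantumMatrixFn q v) *ᵥ w' = 0 → ∃ c : K, w' = c • w := by
    intro hk1
    obtain ⟨x, hx0, hall⟩ := finrank_eq_one_iff'.mp hk1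
    refine ⟨(x : Fin n → K), fun h => hx0 (Subtype.ext h), ?_, ?_⟩
    · have := x.2
      rwa [LinearMap.mem_ker, Matrix.mulVecLin_apply] at this
    · intro w' hw'
      have hmem : w' ∈ LinearMap.ker (quantumMatrixFn q v).mulVecLin := by
        rw [LinearMap.mem_ker, Matrix.mulVecLin_apply]; exact hw'
      obtain ⟨c, hc⟩ := hall ⟨w', hmem⟩
      exact ⟨c, by simpa using congrArg Subtype.val hc.symm⟩
  have hiff1 : (∃ w : Fin n → K, w ≠ 0 ∧ (quantumMatrixFn q v) *ᵥ w = 0) ↔ (quantumMatrixFn q v).rank = n - 1 := by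
    constructor
    · rintro ⟨w, hw0, hw⟩
      have hmem : w ∈ LinearMap.ker (quantumMatrixFn q v).mulVecLin := by
        rw [LinearMap.mem_ker, Matrix.mulVecLin_apply]; exact hw
      have hne : LinearMap.ker (quantumMatrixFn q v).mulVecLin ≠ ⊥ := fun hbot => by
        rw [hbot, Submodule.mem_bot] at hmem; exact hw0 hmem
      have hk0 : Module.finrank K (LinearMap.ker (quantumMatrixFn q v).mulVecLin) ≠ 0 := fun h0 => hne (Submodule.finrank_eq_zero.mp h0)
      omega
    · intro hr
      have hk1 : Module.finrank K (LinearMap.ker (quantumMatrixFn q v).mulVecLin) = 1 := by omega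
      obtain ⟨w, h1, h2, -⟩ := hkex hk1
      exact ⟨w, h1, h2⟩
  have hiff2 : (quantumMatrixFn q v).rank = n - 1 ↔
      ∀ r : Fin n ↪ quantumRowIdx n, ((quantumMatrixFn q v).submatrix r id).det = 0 := by
    constructor
    · intro hr r
      by_contra hd
      have hle := quantum_rank_submatrix_le q v r
      have hu : IsUnit ((quantumMatrixFn q v).submatrix r id) :=
        (Matrix.isUnit_iff_isUnit_det _).mpr (Ne.isUnit hd)
      have hfull : ((quantumMatrixFn q v).submatrix r id).rank = n := by
        rw [Matrix.rank_of_isUnit _ hu, Fintype.card_fin]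
      omega
    · intro hall
      rcases hor with h | h
      · exact h
      · obtain ⟨r, hd⟩ := quantum_minor_of_full_rank q v h
        exact absurd (hall r) hd
  exact ⟨hge, hor, hiff1, hiff2, fun hr => ⟨by omega, hkex (by omega)⟩⟩
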